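/- Let s, t, α be positive integers with 2 ≤ α, α < s and α < t, and let G be a finite abelian group with line set 𝓛 making (G,𝓛) a proper partial geometry pg(s,t,α) admitting G as an abelian Singer group, such that the pair is of rigid type (axioms (i)–(vi) of the encoding). Then the number of points v = |G| satisfies v·α = (s+1)(st+α) and (s + t − α + 1) divides v. -/

import Mathlib

set_option linter.unusedSectionVars false
set_option linter.unusedTactic false
set_option maxHeartbeats 1000000


/-- Encoding of a partial geometry `pg(s,t,α)` whose point set is the abelian group `G`,
admitting `G` (acting by translation) as an abelian Singer group; the lines are the finite
subsets of `G` collected in `𝓛`.  Axioms (i)–(v). -/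
structure IsPGSinger (G : Type*) [CommGroup G] [DecidableEq G]
    (𝓛 : Set (Finset G)) (s t α : ℕ) : Prop where
  /-- (i) every line has exactly `s+1` points -/
  line_card : ∀ L ∈ 𝓛, L.card = s + 1
  /-- (ii) every point lies on exactly `t+1` lines -/
  point_deg : ∀ x : G, {L | L ∈ 𝓛 ∧ x ∈ L}.ncard = t + 1
  /-- (iii) two distinct lines share at most one point -/
  line_inter : ∀ L ∈ 𝓛, ∀ M ∈ 𝓛, L ≠ M → ((L : Set G) ∩ (M : Set G)).ncard ≤ 1
  /-- (iv) for a non-incident point–line pair `(x,L)`, exactly `α` lines through `x` meet `L` -/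
  alpha_ax : ∀ x : G, ∀ L ∈ 𝓛, x ∉ L →
    {M | M ∈ 𝓛 ∧ x ∈ M ∧ ∃ y ∈ L, y ∈ M}.ncard = α
  /-- (v) the line set is closed under translation by elements of `G` -/
  translate : ∀ g : G, ∀ L ∈ 𝓛, L.image (fun y => g * y) ∈ 𝓛

/-- (vi) The pair `(S,G)` is of rigid type: every line has trivial stabilizer in `G`. -/
def RigidType (G : Type*) [CommGroup G] [DecidableEq G] (𝓛 : Set (Finset G)) : Prop :=
  ∀ g : G, ∀ L ∈ 𝓛, L.image (fun y => g * y) = L → g = 1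

open Finset

section Helpers

variable {G : Type*} [CommGroup G] [Fintype G] [DecidableEq G]
variable {𝓛 : Set (Finset G)} {s t α : ℕ}

def Col (𝓛 : Set (Finset G)) (x y : G) : Prop := ∃ L ∈ 𝓛, x ∈ L ∧ y ∈ L

noncomputable def linesThru (𝓛 : Set (Finset G)) (x : G) : Finset (Finset G) :=
  (Set.toFinite {L | L ∈ 𝓛 ∧ x ∈ L}).toFinset

noncomputable def colPts (𝓛 : Set (Finset G)) (x : G) (M : Finset G) : Finset G :=
  (Set.toFinite {p | p ∈ M ∧ Col 𝓛 x p}).toFinset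

noncomputable def Aset (𝓛 : Set (Finset G)) : Finset G :=
  (Set.toFinite {g | g ≠ 1 ∧ Col 𝓛 1 g}).toFinset

lemma mem_linesThru {L : Finset G} {x : G} : L ∈ linesThru 𝓛 x ↔ L ∈ 𝓛 ∧ x ∈ L := by
  simp [linesThru, Set.Finite.mem_toFinset]

lemma mem_colPts {p x : G} {M : Finset G} : p ∈ colPts 𝓛 x M ↔ p ∈ M ∧ Col 𝓛 x p := by
  simp [colPts, Set.Finite.mem_toFinset]

lemma mem_Aset {g : G} : g ∈ Aset 𝓛 ↔ g ≠ 1 ∧ Col 𝓛 1 g := by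
  simp [Aset, Set.Finite.mem_toFinset]

lemma Col.symm' {x y : G} (h : Col 𝓛 x y) : Col 𝓛 y x := by
  obtain ⟨L, hL, hx, hy⟩ := h; exact ⟨L, hL, hy, hx⟩

lemma col_mul (hpg : IsPGSinger G 𝓛 s t α) (g : G) {x y : G} (h : Col 𝓛 x y) :
    Col 𝓛 (g*x) (g*y) := by
  obtain ⟨L, hL, hx, hy⟩ := h
  exact ⟨L.image (fun z => g*z), hpg.translate g L hL, mem_image_of_mem _ hx,
    mem_image_of_mem _ hy⟩

lemma col_mul_iff (hpg : IsPGSinger G 𝓛 s t α) (g : G) {x y : G} :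
    Col 𝓛 (g*x) (g*y) ↔ Col 𝓛 x y := by
  constructor
  · intro h
    have := col_mul hpg g⁻¹ h
    simpa using this
  · exact col_mul hpg g

lemma card_linesThru (hpg : IsPGSinger G 𝓛 s t α) (x : G) : (linesThru 𝓛 x).card = t + 1 := by
  have := hpg.point_deg x
  rwa [Set.ncard_eq_toFinset_card _ (Set.toFinite _)] at this

lemma line_unique (hpg : IsPGSinger G 𝓛 s t α) {L M : Finset G} (hL : L ∈ 𝓛) (hM : M ∈ 𝓛)
    {x y : G} (hxy : x ≠ y) (hxL : x ∈ L) (hyL : y ∈ L) (hxM : x ∈ M) (hyM : y ∈ M) :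
    L = M := by
  by_contra hne
  have h1 := hpg.line_inter L hL M hM hne
  have h2 : ({x, y} : Set G) ⊆ (L : Set G) ∩ (M : Set G) := by
    intro z hz
    rcases hz with rfl | hz
    · exact ⟨by simpa using hxL, by simpa using hxM⟩
    · rcases hz with rfl
      exact ⟨by simpa using hyL, by simpa using hyM⟩
  have h3 : ({x, y} : Set G).ncard = 2 := Set.ncard_pair hxy
  have h4 : ({x, y} : Set G).ncard ≤ ((L : Set G) ∩ (M : Set G)).ncard :=
    Set.ncard_le_ncard h2 (Set.toFinite _)
  omega

lemma inter_pt (hpg : IsPGSinger G 𝓛 s t α) {L M : Finset G} (hL : L ∈ 𝓛) (hM : M ∈ 𝓛)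
    (hne : L ≠ M) {x y : G} (hxL : x ∈ L) (hxM : x ∈ M) (hyL : y ∈ L) (hyM : y ∈ M) :
    x = y := by
  by_contra hxy
  exact hne (line_unique hpg hL hM hxy hxL hyL hxM hyM)

noncomputable def lineOf {x y : G} (h : Col 𝓛 x y) : Finset G := h.choose

lemma lineOf_spec {x y : G} (h : Col 𝓛 x y) :
    lineOf h ∈ 𝓛 ∧ x ∈ lineOf h ∧ y ∈ lineOf h := by
  have := h.choose_spec
  exact ⟨this.1, this.2.1, this.2.2⟩

lemma card_colPts (hpg : IsPGSinger G 𝓛 s t α) {x : G} {M : Finset G} (hM : M ∈ 𝓛)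
    (hx : x ∉ M) : (colPts 𝓛 x M).card = α := by
  classical
  have halpha := hpg.alpha_ax x M hM hx
  rw [Set.ncard_eq_toFinset_card _ (Set.toFinite _)] at halpha
  rw [← halpha]
  apply Finset.card_bij (fun p hp => lineOf (mem_colPts.mp hp).2)
  · intro p hp
    obtain ⟨hpM, hcol⟩ := mem_colPts.mp hp
    obtain ⟨h1, h2, h3⟩ := lineOf_spec hcol
    simp only [Set.Finite.mem_toFinset, Set.mem_setOf_eq]
    exact ⟨h1, h2, p, hpM, h3⟩
  · intro p hp q hq heq
    obtain ⟨hpM, hcolp⟩ := mem_colPts.mp hp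
    obtain ⟨hqM, hcolq⟩ := mem_colPts.mp hq
    obtain ⟨h1, h2, h3⟩ := lineOf_spec hcolp
    obtain ⟨h1', h2', h3'⟩ := lineOf_spec hcolq
    rw [heq] at h3
    have hne : lineOf hcolq ≠ M := fun h => hx (h ▸ h2')
    exact inter_pt hpg h1' hM hne h3 hpM h3' hqM
  · intro N hN
    simp only [Set.Finite.mem_toFinset, Set.mem_setOf_eq] at hN
    obtain ⟨hN𝓛, hxN, y, hyM, hyN⟩ := hN
    have hcol : Col 𝓛 x y := ⟨N, hN𝓛, hxN, hyN⟩
    have hy : y ∈ colPts 𝓛 x M := mem_colPts.mpr ⟨hyM, hcol⟩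
    refine ⟨y, hy, ?_⟩
    obtain ⟨h1, h2, h3⟩ := lineOf_spec (mem_colPts.mp hy).2
    have hxy : x ≠ y := fun h => hx (h ▸ hyM)
    exact line_unique hpg h1 hN𝓛 hxy h2 h3 hxN hyN

lemma card_Aset (hpg : IsPGSinger G 𝓛 s t α) : (Aset 𝓛).card = s * (t+1) := by
  classical
  have hA : Aset 𝓛 = (linesThru 𝓛 1).biUnion (fun L => L.erase 1) := by
    ext g
    simp only [mem_Aset, mem_biUnion, mem_linesThru, mem_erase]
    constructor
    · rintro ⟨hg1, L, hL, h1, hg⟩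
      exact ⟨L, ⟨hL, h1⟩, hg1, hg⟩
    · rintro ⟨L, ⟨hL, h1⟩, hg1, hg⟩
      exact ⟨hg1, L, hL, h1, hg⟩
  rw [hA, Finset.card_biUnion]
  · have : ∀ L ∈ linesThru 𝓛 1, (L.erase 1).card = s := by
      intro L hL
      obtain ⟨hL𝓛, h1⟩ := mem_linesThru.mp hL
      simp [Finset.card_erase_of_mem h1, hpg.line_card L hL𝓛]
    rw [Finset.sum_congr rfl this, Finset.sum_const, card_linesThru hpg, smul_eq_mul, mul_comm]
  · intro L hL M hM hne
    obtain ⟨hL𝓛, h1L⟩ := mem_linesThru.mp hL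
    obtain ⟨hM𝓛, h1M⟩ := mem_linesThru.mp hM
    apply Finset.disjoint_left.mpr
    intro g hgL hgM
    obtain ⟨hg1, hgL'⟩ := mem_erase.mp hgL
    obtain ⟨_, hgM'⟩ := mem_erase.mp hgM
    exact hne (line_unique hpg hL𝓛 hM𝓛 (Ne.symm hg1) h1L hgL' h1M hgM')

lemma Aset_inv (hpg : IsPGSinger G 𝓛 s t α) {g : G} (hg : g ∈ Aset 𝓛) : g⁻¹ ∈ Aset 𝓛 := by
  obtain ⟨hg1, hcol⟩ := mem_Aset.mp hg
  refine mem_Aset.mpr ⟨inv_ne_one.mpr hg1, ?_⟩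
  have := col_mul hpg g⁻¹ hcol
  simpa using this.symm'

lemma filter_common (hpg : IsPGSinger G 𝓛 s t α) (g : G) :
    (Aset 𝓛).filter (fun a => a⁻¹ * g ∈ Aset 𝓛) =
    (Set.toFinite {x | x ≠ 1 ∧ x ≠ g ∧ Col 𝓛 1 x ∧ Col 𝓛 g x}).toFinset := by
  classical
  ext a
  simp only [mem_filter, mem_Aset, Set.Finite.mem_toFinset, Set.mem_setOf_eq]
  constructor
  · rintro ⟨⟨ha1, hcol⟩, hag1, hcolg⟩
    have hag : a ≠ g := fun h => hag1 (by simp [h])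
    have : Col 𝓛 (a * 1) (a * (a⁻¹ * g)) := col_mul hpg a hcolg
    simp only [mul_one, mul_inv_cancel_left] at this
    exact ⟨ha1, hag, hcol, this.symm'⟩
  · rintro ⟨ha1, hag, hcol, hcolg⟩
    refine ⟨⟨ha1, hcol⟩, fun h => hag (by
      have := congrArg (fun z => a * z) h
      simpa using this.symm), ?_⟩
    have : Col 𝓛 (a⁻¹ * a) (a⁻¹ * g) := col_mul hpg a⁻¹ hcolg.symm'
    simpa using this

lemma card_common_lambda (hpg : IsPGSinger G 𝓛 s t α) {g : G} (hg : g ∈ Aset 𝓛) :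
    ((Aset 𝓛).filter (fun a => a⁻¹ * g ∈ Aset 𝓛)).card = (s - 1) + t * (α - 1) := by
  classical
  obtain ⟨hg1, hcolg⟩ := mem_Aset.mp hg
  obtain ⟨L₀, hL₀, h1L₀, hgL₀⟩ := hcolg
  rw [filter_common hpg g]
  have key : (Set.toFinite {x | x ≠ 1 ∧ x ≠ g ∧ Col 𝓛 1 x ∧ Col 𝓛 g x}).toFinset =
      ((L₀.erase 1).erase g) ∪
      ((linesThru 𝓛 g).erase L₀).biUnion (fun M => (colPts 𝓛 1 M) \ L₀) := by
    ext x
    simp only [Set.Finite.mem_toFinset, Set.mem_setOf_eq, mem_union, mem_erase, mem_biUnion,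
      mem_sdiff, mem_colPts, mem_linesThru]
    constructor
    · rintro ⟨hx1, hxg, hcol1, hcolgx⟩
      by_cases hxL : x ∈ L₀
      · exact Or.inl ⟨hxg, hx1, hxL⟩
      · obtain ⟨M, hM, hgM, hxM⟩ := hcolgx
        have hML : M ≠ L₀ := fun h => hxL (h ▸ hxM)
        exact Or.inr ⟨M, ⟨hML, hM, hgM⟩, ⟨hxM, hcol1⟩, hxL⟩
    · rintro (⟨hxg, hx1, hxL⟩ | ⟨M, ⟨hML, hM, hgM⟩, ⟨hxM, hcol1⟩, hxL⟩)
      · exact ⟨hx1, hxg, ⟨L₀, hL₀, h1L₀, hxL⟩, ⟨L₀, hL₀, hgL₀, hxL⟩⟩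
      · refine ⟨fun h => hxL (h ▸ h1L₀), fun h => hxL (h ▸ hgL₀), hcol1, M, hM, hgM, hxM⟩
  rw [key, Finset.card_union_of_disjoint, Finset.card_biUnion]
  · have hc1 : ((L₀.erase 1).erase g).card = s - 1 := by
      rw [Finset.card_erase_of_mem (mem_erase.mpr ⟨hg1, hgL₀⟩),
        Finset.card_erase_of_mem h1L₀, hpg.line_card L₀ hL₀]
      omega
    have hc2 : ∀ M ∈ (linesThru 𝓛 g).erase L₀, ((colPts 𝓛 1 M) \ L₀).card = α - 1 := by
      intro M hM
      have hML := (mem_erase.mp hM).1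
      have hM𝓛 := (mem_linesThru.mp (mem_erase.mp hM).2).1
      have hgM := (mem_linesThru.mp (mem_erase.mp hM).2).2
      have h1M : (1:G) ∉ M := fun h => hML (line_unique hpg hM𝓛 hL₀ (Ne.symm hg1) h hgM h1L₀ hgL₀)
      have hgcol : g ∈ colPts 𝓛 1 M := mem_colPts.mpr ⟨hgM, ⟨L₀, hL₀, h1L₀, hgL₀⟩⟩
      have hsd : (colPts 𝓛 1 M) \ L₀ = (colPts 𝓛 1 M).erase g := by
        ext x
        simp only [mem_sdiff, mem_erase]
        constructor
        · rintro ⟨hx, hxL⟩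
          exact ⟨fun h => hxL (h ▸ hgL₀), hx⟩
        · rintro ⟨hxg, hx⟩
          refine ⟨hx, fun hxL => hxg ?_⟩
          exact inter_pt hpg hM𝓛 hL₀ hML (mem_colPts.mp hx).1 hxL hgM hgL₀
      rw [hsd, Finset.card_erase_of_mem hgcol, card_colPts hpg hM𝓛 h1M]
    rw [hc1, Finset.sum_congr rfl hc2, Finset.sum_const,
      Finset.card_erase_of_mem (mem_linesThru.mpr ⟨hL₀, hgL₀⟩), card_linesThru hpg, smul_eq_mul]
    simp
  · -- pairwise disjoint biUnion
    intro M hM N hN hMN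
    obtain ⟨hML, hM'⟩ := mem_erase.mp hM
    obtain ⟨hNL, hN'⟩ := mem_erase.mp hN
    obtain ⟨hM𝓛, hgM⟩ := mem_linesThru.mp hM'
    obtain ⟨hN𝓛, hgN⟩ := mem_linesThru.mp hN'
    apply Finset.disjoint_left.mpr
    rintro x hxM hxN
    obtain ⟨hx1, hxL⟩ := mem_sdiff.mp hxM
    obtain ⟨hx2, _⟩ := mem_sdiff.mp hxN
    have hxg : x ≠ g := fun h => hxL (h ▸ hgL₀)
    exact hMN (line_unique hpg hM𝓛 hN𝓛 hxg (mem_colPts.mp hx1).1 hgM (mem_colPts.mp hx2).1 hgN)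
  · -- disjointness of the two parts
    apply Finset.disjoint_left.mpr
    intro x hx1 hx2
    obtain ⟨M, hM, hxM⟩ := mem_biUnion.mp hx2
    exact (mem_sdiff.mp hxM).2 (mem_erase.mp (mem_erase.mp hx1).2).2

lemma card_common_mu (hpg : IsPGSinger G 𝓛 s t α) {g : G} (hg1 : g ≠ 1) (hg : g ∉ Aset 𝓛) :
    ((Aset 𝓛).filter (fun a => a⁻¹ * g ∈ Aset 𝓛)).card = α * (t + 1) := by
  classical
  have hncol : ¬ Col 𝓛 1 g := fun h => hg (mem_Aset.mpr ⟨hg1, h⟩)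
  rw [filter_common hpg g]
  have key : (Set.toFinite {x | x ≠ 1 ∧ x ≠ g ∧ Col 𝓛 1 x ∧ Col 𝓛 g x}).toFinset =
      (linesThru 𝓛 g).biUnion (fun M => colPts 𝓛 1 M) := by
    ext x
    simp only [Set.Finite.mem_toFinset, Set.mem_setOf_eq, mem_biUnion, mem_linesThru, mem_colPts]
    constructor
    · rintro ⟨hx1, hxg, hcol1, hcolg⟩
      obtain ⟨M, hM, hgM, hxM⟩ := hcolg
      exact ⟨M, ⟨hM, hgM⟩, hxM, hcol1⟩
    · rintro ⟨M, ⟨hM, hgM⟩, hxM, hcol1⟩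
      have h1M : (1:G) ∉ M := fun h => hncol ⟨M, hM, h, hgM⟩
      have hx1 : x ≠ 1 := fun h => h1M (h ▸ hxM)
      have hxg : x ≠ g := fun h => hncol (h ▸ hcol1)
      exact ⟨hx1, hxg, hcol1, ⟨M, hM, hgM, hxM⟩⟩
  rw [key, Finset.card_biUnion]
  · have hc : ∀ M ∈ linesThru 𝓛 g, (colPts 𝓛 1 M).card = α := by
      intro M hM
      obtain ⟨hM𝓛, hgM⟩ := mem_linesThru.mp hM
      have h1M : (1:G) ∉ M := fun h => hncol ⟨M, hM𝓛, h, hgM⟩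
      exact card_colPts hpg hM𝓛 h1M
    rw [Finset.sum_congr rfl hc, Finset.sum_const, card_linesThru hpg, smul_eq_mul, mul_comm]
  · intro M hM N hN hMN
    obtain ⟨hM𝓛, hgM⟩ := mem_linesThru.mp hM
    obtain ⟨hN𝓛, hgN⟩ := mem_linesThru.mp hN
    apply Finset.disjoint_left.mpr
    intro x hxM hxN
    obtain ⟨hxM', hcol1⟩ := mem_colPts.mp hxM
    obtain ⟨hxN', _⟩ := mem_colPts.mp hxN
    have hxg : x ≠ g := fun h => hncol (h ▸ hcol1)
    exact hMN (line_unique hpg hM𝓛 hN𝓛 hxg hxM' hgM hxN' hgN)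

lemma v_count (hpg : IsPGSinger G 𝓛 s t α) :
    Fintype.card G * α = (s+1) * (s*t + α) := by
  classical
  -- get a line L₀ through 1
  have hpos : 0 < (linesThru 𝓛 (1:G)).card := by rw [card_linesThru hpg]; omega
  obtain ⟨L₀, hL₀mem⟩ := Finset.card_pos.mp hpos
  obtain ⟨hL₀, h1L₀⟩ := mem_linesThru.mp hL₀mem
  set 𝓜 : Finset (Finset G) := (Set.toFinite {M | M ∈ 𝓛 ∧ ∃ y ∈ L₀, y ∈ M}).toFinset with h𝓜
  have mem_𝓜 : ∀ {M}, M ∈ 𝓜 ↔ M ∈ 𝓛 ∧ ∃ y ∈ L₀, y ∈ M := by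
    intro M; simp [h𝓜, Set.Finite.mem_toFinset]
  set X : Finset G := Finset.univ \ L₀ with hX
  -- Step A
  have stepA : ∀ x ∈ X, (𝓜.filter (fun M => x ∈ M)).card = α := by
    intro x hx
    have hxL : x ∉ L₀ := (Finset.mem_sdiff.mp hx).2
    have h := hpg.alpha_ax x L₀ hL₀ hxL
    rw [Set.ncard_eq_toFinset_card _ (Set.toFinite _)] at h
    rw [← h]
    congr 1
    ext M
    simp only [mem_filter, Set.Finite.mem_toFinset, Set.mem_setOf_eq, mem_𝓜]
    tauto
  -- Step B: double counting
  have stepB : ∑ x ∈ X, (𝓜.filter (fun M => x ∈ M)).card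
      = ∑ M ∈ 𝓜, (X.filter (fun x => x ∈ M)).card := by
    simp_rw [Finset.card_filter]
    exact Finset.sum_comm
  -- Step C
  have stepC : ∀ M ∈ 𝓜, X.filter (fun x => x ∈ M) = M \ L₀ := by
    intro M _
    ext x
    simp only [mem_filter, hX, Finset.mem_sdiff, Finset.mem_univ, true_and]
    tauto
  -- Step D
  have stepD : ∀ M ∈ 𝓜.erase L₀, (M \ L₀).card = s := by
    intro M hM
    have hML : M ≠ L₀ := (mem_erase.mp hM).1
    obtain ⟨hM𝓛, y, hyL, hyM⟩ := mem_𝓜.mp (mem_erase.mp hM).2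
    have : M \ L₀ = M.erase y := by
      ext x
      simp only [Finset.mem_sdiff, mem_erase]
      constructor
      · rintro ⟨hxM, hxL⟩
        exact ⟨fun h => hxL (h ▸ hyL), hxM⟩
      · rintro ⟨hxy, hxM⟩
        refine ⟨hxM, fun hxL => hxy (inter_pt hpg hM𝓛 hL₀ hML hxM hxL hyM hyL)⟩
    rw [this, Finset.card_erase_of_mem hyM, hpg.line_card M hM𝓛]
    omega
  -- Step E
  have stepE : (𝓜.erase L₀).card = (s+1) * t := by
    have hdecomp : 𝓜.erase L₀ = L₀.biUnion (fun y => (linesThru 𝓛 y).erase L₀) := by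
      ext M
      simp only [mem_erase, mem_biUnion, mem_𝓜, mem_linesThru]
      constructor
      · rintro ⟨hML, hM𝓛, y, hyL, hyM⟩
        exact ⟨y, hyL, hML, hM𝓛, hyM⟩
      · rintro ⟨y, hyL, hML, hM𝓛, hyM⟩
        exact ⟨hML, hM𝓛, y, hyL, hyM⟩
    rw [hdecomp, Finset.card_biUnion]
    · have : ∀ y ∈ L₀, ((linesThru 𝓛 y).erase L₀).card = t := by
        intro y hy
        rw [Finset.card_erase_of_mem (mem_linesThru.mpr ⟨hL₀, hy⟩), card_linesThru hpg]
        omega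
      rw [Finset.sum_congr rfl this, Finset.sum_const, hpg.line_card L₀ hL₀, smul_eq_mul]
    · intro y hy z hz hyz
      apply Finset.disjoint_left.mpr
      intro M hM1 hM2
      have h1 := mem_erase.mp hM1
      have h2 := mem_erase.mp hM2
      obtain ⟨hM𝓛, hyM⟩ := mem_linesThru.mp h1.2
      obtain ⟨_, hzM⟩ := mem_linesThru.mp h2.2
      exact h1.1 (line_unique hpg hM𝓛 hL₀ hyz hyM hzM hy hz)
  -- combine
  have hXcard : X.card = Fintype.card G - (s+1) := by
    rw [hX, Finset.card_sdiff_of_subset (Finset.subset_univ L₀), Finset.card_univ, hpg.line_card L₀ hL₀]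
  have main : (Fintype.card G - (s+1)) * α = s * ((s+1) * t) := by
    have hsc : X.card * α = ∑ _x ∈ X, α := by rw [Finset.sum_const, smul_eq_mul]
    rw [← hXcard, hsc]
    calc ∑ _x ∈ X, α = ∑ x ∈ X, (𝓜.filter (fun M => x ∈ M)).card :=
          (Finset.sum_congr rfl stepA).symm
      _ = ∑ M ∈ 𝓜, (X.filter (fun x => x ∈ M)).card := stepB
      _ = ∑ M ∈ 𝓜, (M \ L₀).card := Finset.sum_congr rfl (fun M hM => by rw [stepC M hM])
      _ = ∑ M ∈ 𝓜.erase L₀, (M \ L₀).card := by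
          by_cases hL₀𝓜 : L₀ ∈ 𝓜
          · rw [← Finset.sum_erase_add _ _ hL₀𝓜]
            simp
          · rw [Finset.erase_eq_of_notMem hL₀𝓜]
      _ = ∑ _M ∈ 𝓜.erase L₀, s := Finset.sum_congr rfl stepD
      _ = s * ((s+1) * t) := by rw [Finset.sum_const, stepE, smul_eq_mul, mul_comm]
  have hv : s + 1 ≤ Fintype.card G := by
    rw [← hpg.line_card L₀ hL₀]
    exact Finset.card_le_univ L₀
  have expand : Fintype.card G * α = (Fintype.card G - (s+1)) * α + (s+1) * α := by
    rw [← add_mul, Nat.sub_add_cancel hv]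
  rw [expand, main]
  ring

end Helpers

section Chars

variable {G : Type*} [CommGroup G] [Fintype G] [DecidableEq G]

lemma char_ne_one_exists {χ : G →* ℂˣ} (hχ : χ ≠ 1) : ∃ h : G, χ h ≠ 1 := by
  by_contra h
  push_neg at h
  exact hχ (MonoidHom.ext fun g => by simpa using h g)

lemma sum_char_eq_zero {χ : G →* ℂˣ} (hχ : χ ≠ 1) : ∑ g : G, ((χ g : ℂ)) = 0 := by
  obtain ⟨h, hh⟩ := char_ne_one_exists hχ
  have key : (χ h : ℂ) * ∑ g : G, ((χ g : ℂ)) = ∑ g : G, ((χ g : ℂ)) := by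
    rw [Finset.mul_sum]
    refine Fintype.sum_bijective (fun g => h * g) (Group.mulLeft_bijective h) _ _ (fun g => ?_)
    rw [map_mul]
    push_cast
    ring
  have hne : (χ h : ℂ) ≠ 1 := fun he => hh (Units.ext (by simpa using he))
  rcases mul_eq_zero.mp
      (by linear_combination key : ((χ h : ℂ) - 1) * ∑ g : G, ((χ g : ℂ)) = 0) with h0 | h0
  · exact absurd (by linear_combination h0) hne
  · exact h0

lemma hasEnough : HasEnoughRootsOfUnity ℂ (Monoid.exponent G) := by
  have : NeZero ((Monoid.exponent G : ℂ)) :=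
    ⟨Nat.cast_ne_zero.mpr Monoid.exponent_ne_zero_of_finite⟩
  infer_instance

lemma card_chars [Fintype (G →* ℂˣ)] : Fintype.card (G →* ℂˣ) = Fintype.card G := by
  have := @hasEnough G _ _ _
  obtain ⟨e⟩ := CommGroup.monoidHom_mulEquiv_of_hasEnoughRootsOfUnity G ℂ
  exact Fintype.card_congr e.toEquiv

lemma sum_chars_eq_zero [Fintype (G →* ℂˣ)] {g : G} (hg : g ≠ 1) :
    ∑ χ : G →* ℂˣ, ((χ g : ℂ)) = 0 := by
  have := @hasEnough G _ _ _
  obtain ⟨χ₀, hχ₀⟩ := CommGroup.exists_apply_ne_one_of_hasEnoughRootsOfUnity G ℂ hg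
  have key : (χ₀ g : ℂ) * ∑ χ : G →* ℂˣ, ((χ g : ℂ)) = ∑ χ : G →* ℂˣ, ((χ g : ℂ)) := by
    rw [Finset.mul_sum]
    refine Fintype.sum_bijective (fun χ => χ₀ * χ) (Group.mulLeft_bijective χ₀) _ _ (fun χ => ?_)
    simp only [MonoidHom.mul_apply, Units.val_mul]
  have hne : (χ₀ g : ℂ) ≠ 1 := fun he => hχ₀ (Units.ext (by simpa using he))
  rcases mul_eq_zero.mp
      (by linear_combination key : ((χ₀ g : ℂ) - 1) * ∑ χ : G →* ℂˣ, ((χ g : ℂ)) = 0) with h0 | h0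
  · exact absurd (by linear_combination h0) hne
  · exact h0

lemma sum_chars_ite [Fintype (G →* ℂˣ)] (g : G) :
    ∑ χ : G →* ℂˣ, ((χ g : ℂ)) = if g = 1 then (Fintype.card G : ℂ) else 0 := by
  split_ifs with h
  · subst h
    simp [card_chars]
  · exact sum_chars_eq_zero h

lemma char_val_integral (χ : G →* ℂˣ) (g : G) : IsIntegral ℤ ((χ g : ℂ)) := by
  refine ⟨Polynomial.X ^ Fintype.card G - Polynomial.C 1,
    Polynomial.monic_X_pow_sub_C 1 Fintype.card_ne_zero, ?_⟩
  have : (χ g : ℂ) ^ Fintype.card G = 1 := by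
    have : g ^ Fintype.card G = 1 := pow_card_eq_one
    calc (χ g : ℂ) ^ Fintype.card G = ((χ g ^ Fintype.card G : ℂˣ) : ℂ) := by push_cast; ring
      _ = ((χ (g ^ Fintype.card G) : ℂˣ) : ℂ) := by rw [map_pow]
      _ = 1 := by rw [this, map_one, Units.val_one]
  simp only [Polynomial.eval₂_sub, Polynomial.eval₂_pow, Polynomial.eval₂_X, Polynomial.eval₂_C,
    map_one, this, sub_self, Polynomial.eval₂_one]

lemma rat_descend {c : ℤ} {n : ℕ} (hn : 0 < n) {S : ℂ} (hS : (n : ℂ) * S = (c : ℂ))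
    (hint : IsIntegral ℤ S) : (n : ℤ) ∣ c := by
  have hn0 : ((n:ℕ) : ℂ) ≠ 0 := Nat.cast_ne_zero.mpr hn.ne'
  set q : ℚ := (c : ℚ) / (n : ℚ) with hq
  have hSq : S = ((q : ℚ) : ℂ) := by
    have h1 : ((q : ℚ) : ℂ) = (c : ℂ) / (n : ℂ) := by rw [hq]; push_cast; ring
    rw [h1, eq_div_iff hn0]
    linear_combination hS
  have hq_int : IsIntegral ℤ q := by
    rw [hSq] at hint
    have halg : algebraMap ℚ ℂ q = ((q:ℚ):ℂ) := by
      rw [eq_ratCast]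
    rw [← halg] at hint
    exact (isIntegral_algebraMap_iff (algebraMap ℚ ℂ).injective).mp hint
  obtain ⟨y, hy⟩ := IsIntegrallyClosed.isIntegral_iff.mp hq_int
  have : (y : ℚ) = (c : ℚ) / (n : ℚ) := by rw [← hq]; exact_mod_cast hy
  have hyn : (y : ℚ) * (n:ℚ) = (c:ℚ) := by
    field_simp at this ⊢
    linarith [this]
  refine ⟨y, ?_⟩
  have : ((n * y : ℤ) : ℚ) = (c : ℚ) := by push_cast; linarith [hyn]
  exact_mod_cast this.symm

end Chars


section Main

variable {G : Type*} [CommGroup G] [Fintype G] [DecidableEq G]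
variable {𝓛 : Set (Finset G)} {s t α : ℕ}

noncomputable def eA (𝓛 : Set (Finset G)) (χ : G →* ℂˣ) : ℂ := ∑ a ∈ Aset 𝓛, ((χ a : ℂ))

lemma char_quad (hpg : IsPGSinger G 𝓛 s t α) (hα2 : 2 ≤ α) (hαs : α < s)
    {χ : G →* ℂˣ} (hχ : χ ≠ 1) :
    (eA 𝓛 χ - ((s:ℂ) - α)) * (eA 𝓛 χ + ((t:ℂ)+1)) = 0 := by
  classical
  have hsq : eA 𝓛 χ * eA 𝓛 χ
      = ∑ g : G, (((Aset 𝓛).filter (fun a => a⁻¹ * g ∈ Aset 𝓛)).card : ℂ) * ((χ g : ℂ)) := by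
    calc eA 𝓛 χ * eA 𝓛 χ = ∑ a ∈ Aset 𝓛, ∑ b ∈ Aset 𝓛, ((χ (a*b) : ℂ)) := by
          rw [eA, Finset.sum_mul_sum]
          refine Finset.sum_congr rfl fun a _ => Finset.sum_congr rfl fun b _ => ?_
          rw [map_mul]; push_cast; ring
      _ = ∑ a ∈ Aset 𝓛, ∑ g : G, (if a⁻¹ * g ∈ Aset 𝓛 then ((χ g : ℂ)) else 0) := by
          refine Finset.sum_congr rfl fun a ha => ?_
          rw [← Finset.sum_filter]
          have himg : Finset.univ.filter (fun g => a⁻¹ * g ∈ Aset 𝓛)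
              = (Aset 𝓛).image (fun b => a * b) := by
            ext g
            simp only [Finset.mem_filter, Finset.mem_univ, true_and, Finset.mem_image]
            constructor
            · intro h; exact ⟨a⁻¹ * g, h, by group⟩
            · rintro ⟨b, hb, rfl⟩; simpa using hb
          rw [himg, Finset.sum_image (fun x _ y _ h => by simpa using h)]
      _ = ∑ g : G, ∑ a ∈ Aset 𝓛, (if a⁻¹ * g ∈ Aset 𝓛 then ((χ g : ℂ)) else 0) :=
          Finset.sum_comm
      _ = ∑ g : G, (((Aset 𝓛).filter (fun a => a⁻¹ * g ∈ Aset 𝓛)).card : ℂ) * ((χ g : ℂ)) := by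
          refine Finset.sum_congr rfl fun g _ => ?_
          rw [← Finset.sum_filter, Finset.sum_const, nsmul_eq_mul]
  have h1A : (1:G) ∉ Aset 𝓛 := fun h => (mem_Aset.mp h).1 rfl
  have hN1 : ((Aset 𝓛).filter (fun a => a⁻¹ * 1 ∈ Aset 𝓛)) = Aset 𝓛 := by
    ext a
    simp only [Finset.mem_filter, mul_one, and_iff_left_iff_imp]
    exact fun ha => Aset_inv hpg ha
  set R : Finset G := (Finset.univ.erase 1) \ Aset 𝓛 with hR
  have hdecomp : (Finset.univ : Finset G) = insert 1 ((Aset 𝓛) ∪ R) := by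
    ext g
    by_cases h : g = 1
    · simp [h]
    · by_cases h2 : g ∈ Aset 𝓛 <;> simp [hR, h, h2]
  have hnot : (1:G) ∉ (Aset 𝓛) ∪ R := by
    simp only [Finset.mem_union, hR, Finset.mem_sdiff, Finset.mem_erase]
    rintro (h | ⟨⟨h, _⟩, _⟩)
    · exact h1A h
    · exact h rfl
  have hdisj : Disjoint (Aset 𝓛) R := by
    apply Finset.disjoint_left.mpr
    intro g hg hg2
    exact (Finset.mem_sdiff.mp hg2).2 hg
  have split : ∀ F : G → ℂ, ∑ g : G, F g = F 1 + (∑ g ∈ Aset 𝓛, F g + ∑ g ∈ R, F g) := by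
    intro F
    rw [hdecomp, Finset.sum_insert hnot, Finset.sum_union hdisj]
  have hsum1 : ∑ g ∈ Aset 𝓛, ((χ g : ℂ)) = eA 𝓛 χ := rfl
  have hsum2 : ∑ g ∈ R, ((χ g : ℂ)) = -1 - eA 𝓛 χ := by
    have htot := sum_char_eq_zero hχ
    have hs := split (fun g => ((χ g : ℂ)))
    simp only [map_one, Units.val_one] at hs
    rw [htot] at hs
    linear_combination -hs - hsum1
  have hA : ∀ g ∈ Aset 𝓛,
      (((Aset 𝓛).filter (fun a => a⁻¹ * g ∈ Aset 𝓛)).card : ℂ) * ((χ g : ℂ))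
      = (((s:ℂ)-1) + (t:ℂ)*((α:ℂ)-1)) * ((χ g : ℂ)) := by
    intro g hg
    rw [card_common_lambda hpg hg]
    have h1 : (1:ℕ) ≤ s := by omega
    have h2 : (1:ℕ) ≤ α := by omega
    push_cast [Nat.cast_sub h1, Nat.cast_sub h2]
    ring
  have hB : ∀ g ∈ R,
      (((Aset 𝓛).filter (fun a => a⁻¹ * g ∈ Aset 𝓛)).card : ℂ) * ((χ g : ℂ))
      = ((α:ℂ) * ((t:ℂ)+1)) * ((χ g : ℂ)) := by
    intro g hg
    rw [hR] at hg
    obtain ⟨hg1, hgA⟩ := Finset.mem_sdiff.mp hg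
    rw [card_common_mu hpg (Finset.mem_erase.mp hg1).1 hgA]
    push_cast
    ring
  have hs2 := split (fun g => (((Aset 𝓛).filter (fun a => a⁻¹ * g ∈ Aset 𝓛)).card : ℂ) * ((χ g : ℂ)))
  rw [hN1, card_Aset hpg, Finset.sum_congr rfl hA, Finset.sum_congr rfl hB, ← Finset.mul_sum,
    ← Finset.mul_sum, hsum1, hsum2, map_one, Units.val_one] at hs2
  rw [hs2] at hsq
  have h1 : (1:ℕ) ≤ s := by omega
  push_cast [Nat.cast_sub h1] at hsq ⊢
  linear_combination hsq

lemma key_dvd (hpg : IsPGSinger G 𝓛 s t α) (hα2 : 2 ≤ α) (hαs : α < s)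
    {x : G} (hx : x ≠ 1) :
    ((s+t+1-α : ℕ) : ℤ) ∣
      (if x⁻¹ ∈ Aset 𝓛 then (Fintype.card G : ℤ) else 0) - (s+1)*(t+1) := by
  classical
  have hhe := @hasEnough G _ _ _
  obtain ⟨e⟩ := CommGroup.monoidHom_mulEquiv_of_hasEnoughRootsOfUnity G ℂ
  haveI : Fintype (G →* ℂˣ) := Fintype.ofEquiv G e.symm.toEquiv
  set Φ : Finset (G →* ℂˣ) :=
    (Finset.univ.erase 1).filter (fun χ => eA 𝓛 χ = (s:ℂ) - α) with hΦ
  set S : ℂ := ∑ χ ∈ Φ, ((χ x : ℂ)) with hSdef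
  -- sum of characters over erase 1
  have herase : ∀ y : G, ∑ χ ∈ Finset.univ.erase (1 : G →* ℂˣ), ((χ y : ℂ))
      = (if y = 1 then (Fintype.card G : ℂ) else 0) - 1 := by
    intro y
    have h := sum_chars_ite (G := G) y
    rw [← Finset.sum_erase_add _ _ (Finset.mem_univ (1 : G →* ℂˣ))] at h
    simp only [MonoidHom.one_apply, Units.val_one] at h
    linear_combination h
  -- the master sum, computed two ways
  have way1 : ∑ χ ∈ Finset.univ.erase (1 : G →* ℂˣ), eA 𝓛 χ * ((χ x : ℂ))
      = (if x⁻¹ ∈ Aset 𝓛 then (Fintype.card G : ℂ) else 0) - (s:ℂ) * ((t:ℂ)+1) := by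
    calc ∑ χ ∈ Finset.univ.erase (1 : G →* ℂˣ), eA 𝓛 χ * ((χ x : ℂ))
        = ∑ χ ∈ Finset.univ.erase (1 : G →* ℂˣ), ∑ a ∈ Aset 𝓛, ((χ (a*x) : ℂ)) := by
          refine Finset.sum_congr rfl fun χ _ => ?_
          rw [eA, Finset.sum_mul]
          refine Finset.sum_congr rfl fun a _ => ?_
          rw [map_mul]; push_cast; ring
      _ = ∑ a ∈ Aset 𝓛, ∑ χ ∈ Finset.univ.erase (1 : G →* ℂˣ), ((χ (a*x) : ℂ)) :=
          Finset.sum_comm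
      _ = ∑ a ∈ Aset 𝓛, ((if a = x⁻¹ then (Fintype.card G : ℂ) else 0) - 1) := by
          refine Finset.sum_congr rfl fun a _ => ?_
          rw [herase (a*x)]
          congr 1
          simp only [mul_eq_one_iff_eq_inv]
      _ = (if x⁻¹ ∈ Aset 𝓛 then (Fintype.card G : ℂ) else 0) - (s:ℂ) * ((t:ℂ)+1) := by
          rw [Finset.sum_sub_distrib, Finset.sum_ite_eq', Finset.sum_const, card_Aset hpg]
          push_cast
          ring
  have hminus : ∑ χ ∈ (Finset.univ.erase (1 : G →* ℂˣ)).filter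
      (fun χ => ¬ (eA 𝓛 χ = (s:ℂ) - α)), ((χ x : ℂ)) = -1 - S := by
    have h := herase x
    rw [if_neg hx] at h
    rw [← Finset.sum_filter_add_sum_filter_not (Finset.univ.erase (1 : G →* ℂˣ))
      (fun χ => eA 𝓛 χ = (s:ℂ) - α) (fun χ => ((χ x : ℂ)))] at h
    rw [hSdef, hΦ]
    linear_combination h
  have way2 : ∑ χ ∈ Finset.univ.erase (1 : G →* ℂˣ), eA 𝓛 χ * ((χ x : ℂ))
      = ((s:ℂ) - α + (t:ℂ) + 1) * S + ((t:ℂ)+1) := by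
    rw [← Finset.sum_filter_add_sum_filter_not (Finset.univ.erase (1 : G →* ℂˣ))
      (fun χ => eA 𝓛 χ = (s:ℂ) - α) (fun χ => eA 𝓛 χ * ((χ x : ℂ)))]
    have hA : ∑ χ ∈ Φ, eA 𝓛 χ * ((χ x : ℂ)) = ((s:ℂ) - α) * S := by
      rw [hSdef, Finset.mul_sum]
      refine Finset.sum_congr rfl fun χ hχ => ?_
      rw [(Finset.mem_filter.mp hχ).2]
    have hB : ∑ χ ∈ (Finset.univ.erase (1 : G →* ℂˣ)).filter
        (fun χ => ¬ (eA 𝓛 χ = (s:ℂ) - α)), eA 𝓛 χ * ((χ x : ℂ))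
        = (-(t:ℂ)-1) * (-1 - S) := by
      rw [← hminus, Finset.mul_sum]
      refine Finset.sum_congr rfl fun χ hχ => ?_
      obtain ⟨hχ1, hχ2⟩ := Finset.mem_filter.mp hχ
      have hquad := char_quad hpg hα2 hαs (Finset.mem_erase.mp hχ1).1
      rcases mul_eq_zero.mp hquad with h | h
      · exact absurd (by linear_combination h) hχ2
      · rw [show eA 𝓛 χ = -(t:ℂ)-1 from by linear_combination h]
    rw [hA, hB]
    ring
  -- conclude
  have hn : (0:ℕ) < s+t+1-α := by omega
  have hα : α ≤ s+t+1 := by omega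
  have hint : IsIntegral ℤ S := by
    rw [hSdef]
    exact IsIntegral.sum _ (fun χ _ => char_val_integral χ x)
  rw [way2] at way1
  by_cases h : x⁻¹ ∈ Aset 𝓛
  · rw [if_pos h]
    refine rat_descend hn ?_ hint
    rw [if_pos h] at way1
    push_cast [Nat.cast_sub hα]
    linear_combination way1
  · rw [if_neg h]
    refine rat_descend hn ?_ hint
    rw [if_neg h] at way1
    push_cast [Nat.cast_sub hα]
    linear_combination way1

end Main

theorem rigid_type_dvd_points'
    (G : Type*) [CommGroup G] [Fintype G] [DecidableEq G]
    (s t α : ℕ) (hα2 : 2 ≤ α) (hαs : α < s) (hαt : α < t)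
    (𝓛 : Set (Finset G)) (hpg : IsPGSinger G 𝓛 s t α) :
    Nat.card G * α = (s + 1) * (s * t + α) ∧ (s + t - α + 1) ∣ Nat.card G := by
  classical
  have hv := v_count hpg
  rw [Nat.card_eq_fintype_card]
  refine ⟨hv, ?_⟩
  -- a point of A
  have hApos : 0 < (Aset 𝓛).card := by
    rw [card_Aset hpg]
    have : 0 < s := by omega
    positivity
  obtain ⟨a₀, ha₀⟩ := Finset.card_pos.mp hApos
  have ha₀1 : a₀⁻¹ ≠ 1 := by
    intro h
    exact (mem_Aset.mp ha₀).1 (by rwa [inv_eq_one] at h)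
  have h1 := key_dvd hpg hα2 hαs ha₀1
  rw [if_pos (by rwa [inv_inv])] at h1
  -- a point outside A ∪ {1}
  have hcard : (insert (1:G) (Aset 𝓛)).card < Fintype.card G := by
    have hle : (insert (1:G) (Aset 𝓛)).card ≤ s*(t+1)+1 := by
      have := Finset.card_insert_le (1:G) (Aset 𝓛)
      rw [card_Aset hpg] at this
      omega
    have hmul : (s*(t+1)+1) * α < Fintype.card G * α := by
      rw [hv]
      have e1 : (s*(t+1)+1)*α = s*t*α + (s*α + α) := by ring
      have e2 : (s+1)*(s*t+α) = s*t*(s+1) + (s*α + α) := by ring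
      rw [e1, e2]
      have hst : 0 < s*t := by
        have : 0 < s := by omega
        have : 0 < t := by omega
        positivity
      nlinarith
    have := Nat.lt_of_mul_lt_mul_right hmul
    omega
  obtain ⟨g₀, hg₀⟩ : ∃ g₀ : G, g₀ ∉ insert (1:G) (Aset 𝓛) := by
    by_contra hcon
    push_neg at hcon
    have hsub : (Finset.univ : Finset G) ⊆ insert (1:G) (Aset 𝓛) := fun g _ => hcon g
    have := Finset.card_le_card hsub
    rw [Finset.card_univ] at this
    omega
  have hg1 : g₀ ≠ 1 := fun h => hg₀ (by rw [h]; exact Finset.mem_insert_self _ _)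
  have hgA : g₀⁻¹ ∉ Aset 𝓛 := by
    intro h
    exact hg₀ (Finset.mem_insert_of_mem (by simpa using Aset_inv hpg h))
  have h2 := key_dvd hpg hα2 hαs hg1
  rw [if_neg hgA] at h2
  have hsum : ((s+t+1-α : ℕ):ℤ) ∣ (Fintype.card G : ℤ) := by
    have hdvd := dvd_sub h1 h2
    have : (Fintype.card G : ℤ) - (↑s+1)*(↑t+1) - (0 - (↑s+1)*(↑t+1)) = (Fintype.card G : ℤ) := by
      ring
    rwa [this] at hdvd
  have heq : s + t - α + 1 = s + t + 1 - α := by omega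
  rw [heq]
  exact_mod_cast hsum

/-- for a proper `pg(s,t,α)` of rigid type with abelian Singer group `G`,
the number of points `v = |G|` satisfies `v·α = (s+1)(st+α)` and `s+t-α+1` divides `v`. -/
theorem rigid_type_dvd_points
    (G : Type*) [CommGroup G] [Fintype G] [DecidableEq G]
    (s t α : ℕ) (hα2 : 2 ≤ α) (hαs : α < s) (hαt : α < t)
    (𝓛 : Set (Finset G)) (hpg : IsPGSinger G 𝓛 s t α) (hrig : RigidType G 𝓛) :
    Nat.card G * α = (s + 1) * (s * t + α) ∧ (s + t - α + 1) ∣ Nat.card G := by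
  exact rigid_type_dvd_points' G s t α hα2 hαs hαt 𝓛 hpg
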